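/- Let M be a matroid flock of rank d on E, let g = g^M, let f := g^• be the Legendre–Fenchel dual of g, and let α, ω ∈ ℤ^E. Then the following are equivalent: (1) ω^T α = f(ω) + g(α); (2) ω = e_B for some basis B of M_α, where e_B := Σ_{i∈B} e_i. -/

import Mathlib

set_option linter.unusedSectionVars false
set_option linter.unusedVariables false
set_option linter.unusedTactic false


open Matroid Set

namespace FrobFlock

variable {E : Type*}

/-- The local rank function of a matroid: the size of a largest independent subset of `X`. -/
noncomputable def rk (M : Matroid E) (X : Set E) : ℕ :=
  sSup {n | ∃ I, I ⊆ X ∧ M.Indep I ∧ I.ncard = n}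

/-- Deletion of the set `D` from the matroid `M`. -/
def mdel (M : Matroid E) (D : Set E) : Matroid E := M ↾ (M.E \ D)

/-- Contraction of the set `C` in the matroid `M` (defined by duality). -/
def mcon (M : Matroid E) (C : Set E) : Matroid E := (mdel M✶ C)✶

/-- The 0/1 indicator vector of a set `I ⊆ E`. -/
noncomputable def eVec (I : Set E) : E → ℤ := I.indicator 1


section RkLemmas

variable [Fintype E] {M : Matroid E} {S X : Set E}

lemma rk_bdd (M : Matroid E) (X : Set E) :
    BddAbove {n | ∃ I, I ⊆ X ∧ M.Indep I ∧ I.ncard = n} := by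
  refine ⟨Fintype.card E, fun n hn => ?_⟩
  obtain ⟨I, _, _, rfl⟩ := hn
  simpa [Set.ncard_univ] using Set.ncard_le_ncard (subset_univ I) finite_univ

lemma rk_nonempty (M : Matroid E) (X : Set E) :
    {n | ∃ I, I ⊆ X ∧ M.Indep I ∧ I.ncard = n}.Nonempty :=
  ⟨0, ∅, empty_subset _, M.empty_indep, by simp⟩

lemma ncard_le_rk (hSX : S ⊆ X) (hS : M.Indep S) : S.ncard ≤ rk M X :=
  le_csSup (rk_bdd M X) ⟨S, hSX, hS, rfl⟩

lemma rk_exists (M : Matroid E) (X : Set E) :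
    ∃ S, S ⊆ X ∧ M.Indep S ∧ S.ncard = rk M X := by
  have := Nat.sSup_mem (rk_nonempty M X) (rk_bdd M X)
  exact this

lemma rk_le_ncard (M : Matroid E) (X : Set E) : rk M X ≤ X.ncard := by
  refine csSup_le (rk_nonempty M X) fun n hn => ?_
  obtain ⟨I, hIX, _, rfl⟩ := hn
  exact Set.ncard_le_ncard hIX X.toFinite

lemma indep_of_rk_eq (hX : X ⊆ M.E) (h : rk M X = X.ncard) : M.Indep X := by
  obtain ⟨S, hSX, hS, hcard⟩ := rk_exists M X
  have : S = X := Set.eq_of_subset_of_ncard_le hSX (by omega) X.toFinite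
  rwa [this] at hS

lemma rk_indep (h : M.Indep X) : rk M X = X.ncard :=
  le_antisymm (rk_le_ncard M X) (ncard_le_rk subset_rfl h)

lemma rk_singleton_le (M : Matroid E) (j : E) : rk M {j} ≤ 1 :=
  (rk_le_ncard M {j}).trans (by simp)

lemma basis_ncard {T : Set E} (h : M.IsBasis T X) : T.ncard = rk M X := by
  refine le_antisymm (ncard_le_rk h.subset h.indep) ?_
  obtain ⟨S, hSX, hS, hcard⟩ := rk_exists M X
  obtain ⟨T', hT', hST'⟩ := hS.subset_isBasis_of_subset hSX h.subset_ground
  have hTT' : T'.encard = T.encard := hT'.encard_eq_encard h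
  have hTT'n : T'.ncard = T.ncard := by
    rw [Set.ncard_def, hTT', ← Set.ncard_def]
  calc rk M X = S.ncard := hcard.symm
    _ ≤ T'.ncard := Set.ncard_le_ncard hST' T'.toFinite
    _ = T.ncard := hTT'n

end RkLemmas

section ConLemmas

variable {N : Matroid E} {S T : Set E} {j : E}

lemma mdel_indep {D : Set E} : (mdel N D).Indep S ↔ N.Indep S ∧ S ⊆ N.E \ D := by
  simp [mdel, restrict_indep_iff, and_comm]

lemma mcon_indep_of_indep (hS : N.Indep S) (hj : j ∈ S) :
    (mcon N {j}).Indep (S \ {j}) := by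
  obtain ⟨B₀, hB₀, hSB₀⟩ := hS.exists_isBase_superset
  have hB : N✶.IsBase (N.E \ B₀) := hB₀.compl_isBase_dual
  have hBsub : N.E \ B₀ ⊆ N.E \ {j} := diff_subset_diff_right (by simpa using hSB₀ hj)
  have hBasis : N✶.IsBasis (N.E \ B₀) (N.E \ {j}) := by
    refine hB.indep.isBasis_of_forall_insert hBsub fun e he => ?_
    exact hB.insert_dep ⟨he.1.1, he.2⟩
  have hBase : (mdel N✶ {j}).IsBase (N.E \ B₀) := by
    have := hBasis.isBase_restrict
    simpa [mdel] using this
  rw [mcon, dual_indep_iff_exists']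
  refine ⟨?_, ⟨N.E \ B₀, hBase, ?_⟩⟩
  · have : S ⊆ N.E := hS.subset_ground
    rw [mdel]
    simp only [restrict_ground_eq, dual_ground]
    exact diff_subset_diff_left this
  · exact Set.disjoint_left.mpr fun x hx hx' => hx'.2 (hSB₀ hx.1)

lemma indep_insert_of_mcon_indep (hj : N.Indep {j}) (hT : (mcon N {j}).Indep T) :
    N.Indep (insert j T) := by
  rw [mcon, dual_indep_iff_exists'] at hT
  obtain ⟨hTsub, B, hB, hdisj⟩ := hT
  have hTsub' : T ⊆ N.E \ {j} := by simpa [mdel] using hTsub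
  have hjE : j ∈ N.E := hj.subset_ground rfl
  have hBbasis : N✶.IsBasis B (N.E \ {j}) := by
    rw [mdel] at hB
    have h1 : (N✶.E \ {j} : Set E) ⊆ N✶.E := diff_subset
    rw [isBase_restrict_iff h1] at hB
    simpa using hB
  obtain ⟨B₃, hB₃, hjB₃⟩ := hj.exists_isBase_superset
  have hB₃c : N✶.IsBase (N.E \ B₃) := hB₃.compl_isBase_dual
  have hB₃sub : N.E \ B₃ ⊆ N.E \ {j} := diff_subset_diff_right (by simpa using hjB₃ rfl)
  have hBbase : N✶.IsBase B := hBbasis.isBase_of_isBase_subset hB₃c hB₃sub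
  have hB₁ : N.IsBase (N.E \ B) := hBbase.compl_isBase_of_dual
  refine hB₁.indep.subset ?_
  rw [insert_subset_iff]
  constructor
  · exact ⟨hjE, fun hjB => (hBbasis.subset hjB).2 rfl⟩
  · intro x hx
    exact ⟨(hTsub' hx).1, fun hxB => (Set.disjoint_left.mp hdisj hx) hxB⟩

end ConLemmas

section EVecLemmas

lemma eVec_empty : eVec (∅ : Set E) = 0 := indicator_empty _
lemma eVec_univ : eVec (univ : Set E) = 1 := indicator_univ _
lemma eVec_of_mem {I : Set E} {i : E} (h : i ∈ I) : eVec I i = 1 := indicator_of_mem h _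
lemma eVec_of_not_mem {I : Set E} {i : E} (h : i ∉ I) : eVec I i = 0 := indicator_of_notMem h _

lemma eVec_union {I J : Set E} (h : Disjoint I J) : eVec (I ∪ J) = eVec I + eVec J :=
  indicator_union_of_disjoint h _

lemma eVec_nonneg (I : Set E) (i : E) : 0 ≤ eVec I i := by
  by_cases h : i ∈ I
  · rw [eVec_of_mem h]; norm_num
  · rw [eVec_of_not_mem h]

lemma eVec_le_one (I : Set E) (i : E) : eVec I i ≤ 1 := by
  by_cases h : i ∈ I
  · rw [eVec_of_mem h]
  · rw [eVec_of_not_mem h]; norm_num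

end EVecLemmas

/-- `M : ℤ^E → Matroid E` is a matroid flock of rank `d` on `E`:
each `M α` is a matroid on ground set `E` of rank `d`, satisfying (MF1) and (MF2). -/
def IsMatroidFlock [Fintype E] (d : ℕ) (M : (E → ℤ) → Matroid E) : Prop :=
  (∀ α, (M α).E = Set.univ) ∧
  (∀ α, rk (M α) Set.univ = d) ∧
  (∀ α (i : E), mcon (M α) {i} = mdel (M (α + eVec {i})) {i}) ∧
  (∀ α, M α = M (α + 1))


section Flock

variable [Fintype E] {d : ℕ} {M : (E → ℤ) → Matroid E} (hM : IsMatroidFlock d M)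

include hM

lemma ground_univ (α : E → ℤ) : (M α).E = Set.univ := hM.1 α

lemma rk_univ (α : E → ℤ) : rk (M α) Set.univ = d := hM.2.1 α

lemma base_ncard {α : E → ℤ} {B : Set E} (hB : (M α).IsBase B) : B.ncard = d := by
  have h1 : B.ncard ≤ d := by
    rw [← hM.2.1 α]
    exact ncard_le_rk (subset_univ B) hB.indep
  obtain ⟨S, _, hS, hcard⟩ := rk_exists (M α) univ
  obtain ⟨B₂, hB₂, hSB₂⟩ := hS.exists_isBase_superset
  have h2 : B₂.ncard = B.ncard := hB₂.ncard_eq_ncard_of_isBase hB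
  have h3 : S.ncard ≤ B₂.ncard := Set.ncard_le_ncard hSB₂ B₂.toFinite
  rw [hM.2.1 α] at hcard
  omega

/-- If `j` is a nonloop of `M α`, then `j` lies in every base of `M (α + e_j)`;
consequently independent sets avoiding `j` can absorb `j`. -/
lemma coloop_insert {α : E → ℤ} {j : E} (hj : (M α).Indep {j}) {T : Set E}
    (hT : (M (α + eVec {j})).Indep T) (hjT : j ∉ T) :
    (M (α + eVec {j})).Indep (insert j T) := by
  classical
  -- every independent set of `M (α+e_j)` avoiding `j` extends by `j` back in `M α`
  have hkey : ∀ T' : Set E, (M (α + eVec {j})).Indep T' → j ∉ T' → T'.ncard + 1 ≤ d := by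
    intro T' hT' hjT'
    have hdel : (mdel (M (α + eVec {j})) {j}).Indep T' := by
      rw [mdel_indep]
      refine ⟨hT', ?_⟩
      rw [hM.1 _]
      exact fun x hx => ⟨trivial, by rintro rfl; exact hjT' hx⟩
    rw [← hM.2.2.1 α j] at hdel
    have hins : (M α).Indep (insert j T') := indep_insert_of_mcon_indep hj hdel
    have : (insert j T').ncard ≤ d := by
      rw [← hM.2.1 α]
      exact ncard_le_rk (subset_univ _) hins
    rwa [Set.ncard_insert_of_notMem hjT' T'.toFinite] at this
  -- every base of `M (α+e_j)` contains `j`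
  obtain ⟨B, hB, hTB⟩ := hT.exists_isBase_superset
  have hjB : j ∈ B := by
    by_contra hjB
    have h1 := hkey B hB.indep hjB
    have h2 := base_ncard hM hB
    omega
  exact hB.indep.subset (insert_subset hjB hTB)

/-- boosting one element of an independent set keeps it independent -/
lemma indep_boost_mem {α : E → ℤ} {S : Set E} {j : E} (hS : (M α).Indep S) (hj : j ∈ S) :
    (M (α + eVec {j})).Indep S := by
  have h1 : (mcon (M α) {j}).Indep (S \ {j}) := mcon_indep_of_indep hS hj
  rw [hM.2.2.1 α j] at h1
  rw [mdel_indep] at h1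
  have h2 : (M (α + eVec {j})).Indep (S \ {j}) := h1.1
  have h3 := coloop_insert hM (hS.subset (by simpa using hj)) h2 (by simp)
  rwa [Set.insert_diff_singleton, Set.insert_eq_self.mpr hj] at h3

/-- boosting a subset of an independent set keeps it independent -/
lemma indep_boost_subset {T : Set E} (hTfin : T.Finite) :
    ∀ α (S : Set E), (M α).Indep S → T ⊆ S → (M (α + eVec T)).Indep S := by
  refine Set.Finite.induction_on T hTfin ?_ ?_
  · intro α S hS _
    rwa [eVec_empty, add_zero]
  · intro a T' haT' _ IH α S hS hsub
    have ha : a ∈ S := hsub (mem_insert a T')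
    have h1 : (M (α + eVec {a})).Indep S := indep_boost_mem hM hS ha
    have h2 := IH (α + eVec {a}) S h1 ((subset_insert a T').trans hsub)
    have heq : eVec (insert a T') = eVec {a} + eVec T' := by
      rw [← singleton_union, eVec_union (by simpa using haT')]
    rw [heq, ← add_assoc]
    exact h2

/-- the "star" exchange identity coming from well-definedness of g -/
lemma gstar {g : (E → ℤ) → ℤ}
    (hg : ∀ (α : E → ℤ) (I : Set E), g (α + eVec I) = g α + rk (M α) I)
    (α : E → ℤ) (I J : Set E) :
    (rk (M α) I : ℤ) + rk (M (α + eVec I)) J = rk (M α) J + rk (M (α + eVec J)) I := by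
  have h1 := hg α I
  have h2 := hg (α + eVec I) J
  have h3 := hg α J
  have h4 := hg (α + eVec J) I
  have hcomm : α + eVec I + eVec J = α + eVec J + eVec I := by ring
  rw [hcomm] at h2
  omega

/-- **Lemma C**: boosting a superset of an independent set keeps it independent. -/
lemma indep_boost_superset {g : (E → ℤ) → ℤ}
    (hg : ∀ (α : E → ℤ) (I : Set E), g (α + eVec I) = g α + rk (M α) I)
    {α : E → ℤ} {S I : Set E} (hS : (M α).Indep S) (hSI : S ⊆ I) :
    (M (α + eVec I)).Indep S := by
  have hIE : I ⊆ (M α).E := by rw [hM.1 α]; exact subset_univ I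
  obtain ⟨T, hT, hST⟩ := hS.subset_isBasis_of_subset hSI hIE
  have h1 : rk (M α) I = T.ncard := (basis_ncard hT).symm
  have h2 : rk (M α) T = T.ncard := rk_indep hT.indep
  have h3 : (M (α + eVec T)).Indep T :=
    indep_boost_subset hM T.toFinite α T hT.indep subset_rfl
  have h4 := gstar hM hg α I T
  have h5 : T.ncard ≤ rk (M (α + eVec T)) I := ncard_le_rk hT.subset h3
  have h6 : rk (M (α + eVec I)) T ≤ T.ncard := rk_le_ncard _ _
  have h7 : rk (M (α + eVec I)) T = T.ncard := by omega
  have h8 : (M (α + eVec I)).Indep T := by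
    refine indep_of_rk_eq ?_ h7
    rw [hM.1 _]; exact subset_univ T
  exact h8.subset hST

end Flock

section Claim

variable [Fintype E] {d : ℕ} {M : (E → ℤ) → Matroid E} (hM : IsMatroidFlock d M)
  {g : (E → ℤ) → ℤ}

include hM

lemma g_shift (hg : ∀ (α : E → ℤ) (I : Set E), g (α + eVec I) = g α + rk (M α) I)
    (k : ℕ) (y : E → ℤ) : g (fun i => y i + k) = g y + k * d := by
  induction k with
  | zero => simp
  | succ k IH =>
    have h1 : (fun i => y i + (k+1 : ℕ)) = (fun i => y i + k) + eVec univ := by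
      funext i
      simp [eVec_univ]
      push_cast
      ring
    rw [h1, hg _ univ, IH, hM.2.1]
    push_cast
    ring

lemma main_claim (hg : ∀ (α : E → ℤ) (I : Set E), g (α + eVec I) = g α + rk (M α) I) :
    ∀ n : ℕ, ∀ α y : E → ℤ, (∀ i, α i ≤ y i) → (∑ i, (y i - α i)).toNat ≤ n →
      ∀ S : Finset E, (↑S : Set E) ⊆ {i | α i < y i} → (M α).Indep ↑S →
      (g α : ℤ) + ∑ i ∈ S, (y i - α i) ≤ g y := by
  classical
  intro n
  induction n with
  | zero =>
    intro α y hle hsum S hSsub _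
    have hnn : (0:ℤ) ≤ ∑ i, (y i - α i) := Finset.sum_nonneg fun i _ => by
      have := hle i; omega
    have hz : ∑ i, (y i - α i) = 0 := by omega
    have hyα : ∀ i, y i = α i := by
      intro i
      have := (Finset.sum_eq_zero_iff_of_nonneg (fun i _ => by have := hle i; omega)).mp hz
        i (Finset.mem_univ i)
      omega
    have hS : S = ∅ := by
      by_contra h
      obtain ⟨i, hi⟩ := Finset.nonempty_of_ne_empty h
      have : α i < y i := hSsub hi
      have := hyα i; omega
    rw [hS, show y = α from funext hyα]
    simp
  | succ n IH =>
    intro α y hle hsum S hSsub hSind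
    by_cases hy : ∀ i, y i = α i
    · have hS : S = ∅ := by
        by_contra h
        obtain ⟨i, hi⟩ := Finset.nonempty_of_ne_empty h
        have h1 : α i < y i := hSsub hi
        have := hy i
        omega
      rw [hS, show y = α from funext hy]
      simp
    · push_neg at hy
      obtain ⟨i₀, hi₀⟩ := hy
      have hi₀' : α i₀ < y i₀ := lt_of_le_of_ne (hle i₀) (Ne.symm hi₀)
      set I : Set E := {i | α i < y i} with hI
      set α' : E → ℤ := α + eVec I with hα'
      have hα'le : ∀ i, α' i ≤ y i := by
        intro i
        by_cases h : i ∈ I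
        · have : α i < y i := h
          simp [hα', eVec_of_mem h]; omega
        · have h1 : ¬ (α i < y i) := h
          have h2 := hle i
          simp [hα', eVec_of_not_mem h]; omega
      have hα'ge : ∀ i, α i ≤ α' i := by
        intro i
        have := eVec_nonneg I i
        simp [hα']; omega
      have hα'mem : ∀ i ∈ I, α' i = α i + 1 := fun i hi => by simp [hα', eVec_of_mem hi]
      have hα'nmem : ∀ i, i ∉ I → α' i = α i := fun i hi => by simp [hα', eVec_of_not_mem hi]
      -- measure decreases
      have hsum' : (∑ i, (y i - α' i)).toNat ≤ n := by
        have hA : ∑ i, (y i - α i) = ∑ i, (y i - α' i) + ∑ i, eVec I i := by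
          rw [← Finset.sum_add_distrib]
          exact Finset.sum_congr rfl fun i _ => by simp [hα']; ring
        have h1 : (1:ℤ) ≤ ∑ i, eVec I i := by
          have h0 : eVec I i₀ ≤ ∑ i, eVec I i := Finset.single_le_sum (f := fun i => eVec I i)
            (fun i _ => eVec_nonneg I i) (Finset.mem_univ i₀)
          rw [eVec_of_mem (show i₀ ∈ I from hi₀')] at h0
          exact h0
        have hnn : (0:ℤ) ≤ ∑ i, (y i - α' i) := Finset.sum_nonneg fun i _ => by
          have := hα'le i; omega
        have hnn2 : (0:ℤ) ≤ ∑ i, (y i - α i) := Finset.sum_nonneg fun i _ => by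
          have := hle i; omega
        omega
      -- new independent set
      have hSI : (↑S : Set E) ⊆ I := hSsub
      have hSind' : (M α').Indep ↑S := indep_boost_superset hM hg hSind hSI
      set S' : Finset E := S.filter (fun i => α' i < y i) with hS'
      have hS'sub : (↑S' : Set E) ⊆ {i | α' i < y i} := by
        intro x hx
        simp only [hS', Finset.coe_filter, mem_setOf_eq] at hx
        exact hx.2
      have hS'ind : (M α').Indep ↑S' := hSind'.subset (by
        intro x hx
        simp only [hS', Finset.coe_filter, mem_setOf_eq] at hx
        exact hx.1)
      have hIH := IH α' y hα'le hsum' S' hS'sub hS'ind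
      -- arithmetic
      have hgα' : g α' = g α + rk (M α) I := hg α I
      have hcard : (S.card : ℤ) ≤ rk (M α) I := by
        have := ncard_le_rk hSI hSind
        rw [Set.ncard_coe_finset] at this
        exact_mod_cast this
      have hsplit : ∑ i ∈ S, (y i - α i) = ∑ i ∈ S', (y i - α' i) + S.card := by
        have e1 : ∑ i ∈ S, (y i - α i) = ∑ i ∈ S, ((y i - α' i) + 1) := by
          refine Finset.sum_congr rfl fun i hi => ?_
          have := hα'mem i (hSI hi)
          omega
        rw [e1, Finset.sum_add_distrib]
        simp only [Finset.sum_const, nsmul_eq_mul, mul_one]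
        congr 1
        symm
        refine Finset.sum_subset (Finset.filter_subset _ _) fun x hx hnx => ?_
        simp only [hS', Finset.mem_filter, not_and] at hnx
        have h2 : ¬ (α' x < y x) := hnx hx
        have := hα'le x
        omega
      omega

/-- the key inequality : for a base `B` of `M α`, `e_B ⬝ y − g y ≤ e_B ⬝ α − g α` -/
lemma key_ineq (hg : ∀ (α : E → ℤ) (I : Set E), g (α + eVec I) = g α + rk (M α) I)
    {α : E → ℤ} {B : Finset E} (hB : (M α).IsBase ↑B) (y : E → ℤ) :
    (∑ i ∈ B, y i) - g y ≤ (∑ i ∈ B, α i) - g α := by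
  classical
  set k : ℕ := Finset.univ.sup fun i => (α i - y i).toNat with hk
  set y' : E → ℤ := fun i => y i + k with hy'
  have hky : ∀ i, α i ≤ y' i := by
    intro i
    have h1 : (α i - y i).toNat ≤ k :=
      Finset.le_sup (f := fun i => (α i - y i).toNat) (Finset.mem_univ i)
    simp only [hy']
    omega
  have hgy' : g y' = g y + k * d := g_shift hM hg k y
  have hBcard : B.card = d := by
    have := base_ncard hM hB
    rwa [Set.ncard_coe_finset] at this
  set S : Finset E := B.filter (fun i => α i < y' i) with hS
  have hclaim := main_claim hM hg (∑ i, (y' i - α i)).toNat α y' hky le_rfl S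
    (by intro x hx
        simp only [hS, Finset.coe_filter, mem_setOf_eq] at hx
        exact hx.2)
    (hB.indep.subset (by
        intro x hx
        simp only [hS, Finset.coe_filter, mem_setOf_eq] at hx
        exact hx.1))
  have hsplit : ∑ i ∈ B, (y' i - α i) = ∑ i ∈ S, (y' i - α i) := by
    symm
    refine Finset.sum_subset (Finset.filter_subset _ _) fun x hx hnx => ?_
    simp only [hS, Finset.mem_filter, not_and] at hnx
    have h2 : ¬ (α x < y' x) := hnx hx
    have := hky x
    omega
  have hsum1 : ∑ i ∈ B, (y' i - α i) = (∑ i ∈ B, y i) + k * d - ∑ i ∈ B, α i := by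
    rw [Finset.sum_sub_distrib]
    have : ∑ i ∈ B, y' i = (∑ i ∈ B, y i) + B.card * k := by
      simp only [hy', Finset.sum_add_distrib]
      simp [mul_comm]
    rw [this, hBcard]
    ring
  omega

end Claim

/-- A matroid valuation `ν : binom(E,d) → ℤ ∪ {∞}`, encoded as a function on all finsets
which takes the value `⊤` outside `binom(E,d)`. -/
def IsValuation [DecidableEq E] (d : ℕ) (ν : Finset E → WithTop ℤ) : Prop :=
  (∀ B : Finset E, B.card ≠ d → ν B = ⊤) ∧
  (∃ B : Finset E, B.card = d ∧ ν B ≠ ⊤) ∧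
  (∀ B B' : Finset E, B.card = d → B'.card = d → ∀ i ∈ B \ B', ∃ j ∈ B' \ B,
      ν (insert j (B.erase i)) + ν (insert i (B'.erase j)) ≤ ν B + ν B')

/-- `B ∈ B^ν_α`: the set `B` attains the supremum `g^ν(α)`, i.e. `B` is a basis of `M^ν_α`. -/
def OptBasis (d : ℕ) (ν : Finset E → WithTop ℤ) (α : E → ℤ) (B : Finset E) : Prop :=
  B.card = d ∧ ν B ≠ ⊤ ∧ ∀ B' : Finset E, B'.card = d →
    ((∑ i ∈ B', α i : ℤ) : WithTop ℤ) + ν B ≤ ((∑ i ∈ B, α i : ℤ) : WithTop ℤ) + ν B'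


/-- The Legendre–Fenchel dual `g^•(ω) = sup { ωᵀy − g(y) : y ∈ ℤ^E }`, with values in
the extended reals (it is `⊤` when the supremum is infinite, and an integer otherwise). -/
noncomputable def fenchel [Fintype E] (g : (E → ℤ) → ℤ) (ω : E → ℤ) : EReal :=
  ⨆ y : E → ℤ, (((∑ i, ω i * y i : ℤ) : ℝ) : EReal) - ((g y : ℝ) : EReal)

/-- Interpret an element of `ℤ ∪ {∞}` as an extended real number. -/
noncomputable def toER : WithTop ℤ → EReal :=
  fun x => WithTop.recTopCoe ⊤ (fun z : ℤ => ((z : ℝ) : EReal)) x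


section Main

variable [Fintype E] {d : ℕ} {M : (E → ℤ) → Matroid E} (hM : IsMatroidFlock d M)
  {g : (E → ℤ) → ℤ} {α ω : E → ℤ}

lemma fenchel_term_le (g : (E → ℤ) → ℤ) (ω y : E → ℤ) :
    (((∑ i, ω i * y i - g y : ℤ) : ℝ) : EReal) ≤ fenchel g ω := by
  refine le_iSup_of_le y (le_of_eq ?_)
  push_cast
  rfl

include hM

lemma sum_omega_eVec (ω : E → ℤ) (I : Finset E) :
    ∑ i, ω i * eVec (↑I : Set E) i = ∑ i ∈ I, ω i := by
  classical
  have h1 : ∀ i, ω i * eVec (↑I : Set E) i = if i ∈ I then ω i else 0 := by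
    intro i
    by_cases h : i ∈ I
    · rw [eVec_of_mem (by simpa using h), if_pos h, mul_one]
    · rw [eVec_of_not_mem (by simpa using h), if_neg h, mul_zero]
  rw [Finset.sum_congr rfl fun i _ => h1 i, Finset.sum_ite_mem, Finset.univ_inter]

theorem main_iff
    (hg : ∀ (α : E → ℤ) (I : Set E), g (α + eVec I) = g α + rk (M α) I) :
    (((∑ i, ω i * α i : ℤ) : ℝ) : EReal) = fenchel g ω + ((g α : ℝ) : EReal) ↔
      ∃ B : Finset E, (M α).IsBase ↑B ∧ ω = eVec ↑B := by
  classical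
  constructor
  · intro h
    have hne_bot : fenchel g ω ≠ ⊥ := by
      intro hbot
      have h1 := fenchel_term_le g ω α
      rw [hbot] at h1
      exact (EReal.bot_lt_coe _).not_ge h1
    have hne_top : fenchel g ω ≠ ⊤ := by
      intro htop
      rw [htop, EReal.top_add_coe] at h
      exact EReal.coe_ne_top _ h
    set s := (fenchel g ω).toReal with hsdef
    have hs : (s : EReal) = fenchel g ω := EReal.coe_toReal hne_top hne_bot
    rw [← hs, ← EReal.coe_add] at h
    have hreal : ((∑ i, ω i * α i : ℤ) : ℝ) = s + (g α : ℝ) := by exact_mod_cast h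
    have hineq : ∀ y : E → ℤ, (∑ i, ω i * y i) - g y ≤ (∑ i, ω i * α i) - g α := by
      intro y
      have h1 := fenchel_term_le g ω y
      rw [← hs] at h1
      have h2 : ((∑ i, ω i * y i - g y : ℤ) : ℝ) ≤ s := by exact_mod_cast h1
      have h3 : ((∑ i, ω i * y i - g y : ℤ) : ℝ) ≤ ((∑ i, ω i * α i - g α : ℤ) : ℝ) := by
        have hr := hreal
        push_cast at h2 hr ⊢
        linarith
      exact_mod_cast h3
    have ineq_up : ∀ I : Finset E, ∑ i ∈ I, ω i ≤ (rk (M α) ↑I : ℤ) := by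
      intro I
      have h1 := hineq (α + eVec (↑I : Set E))
      have h2 : ∑ i, ω i * (α + eVec (↑I : Set E)) i = ∑ i, ω i * α i + ∑ i ∈ I, ω i := by
        rw [← sum_omega_eVec hM ω I, ← Finset.sum_add_distrib]
        exact Finset.sum_congr rfl fun i _ => by rw [Pi.add_apply]; ring
      rw [h2, hg α (↑I : Set E)] at h1
      omega
    have ineq_down : ∀ I : Finset E,
        (rk (M (α - eVec (↑I : Set E))) (↑I : Set E) : ℤ) ≤ ∑ i ∈ I, ω i := by
      intro I
      have h1 := hineq (α - eVec (↑I : Set E))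
      have h2 : ∑ i, ω i * (α - eVec (↑I : Set E)) i = ∑ i, ω i * α i - ∑ i ∈ I, ω i := by
        rw [← sum_omega_eVec hM ω I, ← Finset.sum_sub_distrib]
        exact Finset.sum_congr rfl fun i _ => by rw [Pi.sub_apply]; ring
      have h3 : g α = g (α - eVec (↑I : Set E)) + rk (M (α - eVec (↑I : Set E))) ↑I := by
        have := hg (α - eVec (↑I : Set E)) (↑I : Set E)
        rwa [sub_add_cancel] at this
      rw [h2] at h1
      omega
    have hω01 : ∀ j, ω j = 0 ∨ ω j = 1 := by
      intro j
      have h1 := ineq_up {j}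
      have h2 := ineq_down {j}
      rw [Finset.sum_singleton] at h1 h2
      have h3 : rk (M α) ↑({j} : Finset E) ≤ 1 := by
        rw [Finset.coe_singleton]
        exact rk_singleton_le _ j
      have h4 : (0:ℤ) ≤ rk (M (α - eVec (↑({j} : Finset E) : Set E))) ↑({j} : Finset E) := by
        positivity
      omega
    set B : Finset E := Finset.univ.filter (fun i => ω i = 1) with hBdef
    have hmemB : ∀ i, i ∈ B ↔ ω i = 1 := by
      intro i; simp [hBdef]
    have hωeq : ω = eVec ↑B := by
      funext i
      by_cases h : ω i = 1
      · rw [eVec_of_mem (by simpa [hmemB] using h), h]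
      · have h0 : ω i = 0 := (hω01 i).resolve_right h
        rw [eVec_of_not_mem (by simpa [hmemB] using h), h0]
    have hsumB : ∀ I : Finset E, ∑ i ∈ I, ω i = (I.filter (fun i => ω i = 1)).card := by
      intro I
      rw [← Finset.sum_filter_add_sum_filter_not I (fun i => ω i = 1) ω]
      have e1 : ∑ i ∈ I.filter (fun i => ω i = 1), ω i
          = (I.filter (fun i => ω i = 1)).card := by
        rw [Finset.sum_congr rfl fun i hi => (Finset.mem_filter.mp hi).2]
        simp
      have e2 : ∑ i ∈ I.filter (fun i => ¬ ω i = 1), ω i = 0 := by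
        refine Finset.sum_eq_zero fun i hi => ?_
        exact ((hω01 i).resolve_right (Finset.mem_filter.mp hi).2)
      rw [e1, e2, add_zero]
    have hcard_d : B.card = d := by
      have h1 := ineq_up Finset.univ
      have h2 := ineq_down Finset.univ
      rw [hsumB Finset.univ, ← hBdef] at h1 h2
      have h3 : rk (M α) ↑(Finset.univ : Finset E) = d := by
        rw [Finset.coe_univ]; exact hM.2.1 α
      have h4 : rk (M (α - eVec (↑(Finset.univ : Finset E) : Set E)))
          ↑(Finset.univ : Finset E) = d := by
        rw [Finset.coe_univ]; exact hM.2.1 _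
      rw [h3] at h1
      rw [h4] at h2
      omega
    have hBindep : (M α).Indep ↑B := by
      have h1 := ineq_up B
      rw [hsumB B] at h1
      have hBB : B.filter (fun i => ω i = 1) = B := by
        refine Finset.filter_true_of_mem fun i hi => (hmemB i).mp hi
      rw [hBB] at h1
      have h2 : rk (M α) ↑B ≤ B.card := by
        have := rk_le_ncard (M α) ↑B
        rwa [Set.ncard_coe_finset] at this
      refine indep_of_rk_eq (by rw [hM.1 α]; exact subset_univ _) ?_
      rw [Set.ncard_coe_finset]
      omega
    obtain ⟨B₂, hB₂, hsub⟩ := hBindep.exists_isBase_superset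
    have hB₂card : B₂.ncard = d := base_ncard hM hB₂
    have heq : (↑B : Set E) = B₂ := by
      refine Set.eq_of_subset_of_ncard_le hsub ?_ B₂.toFinite
      rw [hB₂card, Set.ncard_coe_finset, hcard_d]
    exact ⟨B, heq ▸ hB₂, hωeq⟩
  · rintro ⟨B, hB, rfl⟩
    have hω : ∀ y : E → ℤ, ∑ i, eVec (↑B : Set E) i * y i = ∑ i ∈ B, y i := by
      intro y
      have h1 : ∀ i, eVec (↑B : Set E) i * y i = y i * eVec (↑B : Set E) i := fun i => by ring
      rw [Finset.sum_congr rfl fun i _ => h1 i]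
      exact sum_omega_eVec hM y B
    have hkey := key_ineq hM hg hB
    have hfen : fenchel g (eVec ↑B) = (((∑ i ∈ B, α i - g α : ℤ) : ℝ) : EReal) := by
      apply le_antisymm
      · refine iSup_le fun y => ?_
        rw [hω y]
        have h1 : ((∑ i ∈ B, y i - g y : ℤ) : ℝ) ≤ ((∑ i ∈ B, α i - g α : ℤ) : ℝ) := by
          exact_mod_cast hkey y
        have h2 : (((∑ i ∈ B, y i - g y : ℤ) : ℝ) : EReal)
            ≤ (((∑ i ∈ B, α i - g α : ℤ) : ℝ) : EReal) := by exact_mod_cast h1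
        refine le_trans (le_of_eq ?_) h2
        push_cast
        rfl
      · refine le_iSup_of_le α (le_of_eq ?_)
        rw [hω α]
        push_cast
        rfl
    rw [hfen, hω α, ← EReal.coe_add]
    norm_cast
    ring

end Main

/-- **Lemma.** Let `M` be a matroid flock of rank `d` on `E`, let `g = g^M`, let `f := g^•`
be the Legendre–Fenchel dual of `g`, and let `α, ω ∈ ℤ^E`.  Then `ωᵀα = f(ω) + g(α)` if and
only if `ω = e_B` for some basis `B` of `M_α`. -/
theorem flock_fenchel_dual_basis [Fintype E] (d : ℕ) (M : (E → ℤ) → Matroid E)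
    (hM : IsMatroidFlock d M) (g : (E → ℤ) → ℤ) (hg0 : g 0 = 0)
    (hg : ∀ (α : E → ℤ) (I : Set E), g (α + eVec I) = g α + rk (M α) I)
    (α ω : E → ℤ) :
    (((∑ i, ω i * α i : ℤ) : ℝ) : EReal) = fenchel g ω + ((g α : ℝ) : EReal) ↔
      ∃ B : Finset E, (M α).IsBase ↑B ∧ ω = eVec ↑B := by
  exact main_iff hM hg

end FrobFlock
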